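/- Let q ≥ 2 and k ≥ 1 be integers, and let H be the subgroup of GL (Fin 2) ℚ generated by {t^k} ∪ {u k ℓ | ℓ : ℤ}. Then H ≤ BS(1,q); H is normal in BS(1,q), i.e., for every g ∈ BS(1,q) and every h ∈ H, g * h * g⁻¹ ∈ H; and H has finite index in BS(1,q), i.e., the collection of left cosets {g * h | h ∈ H} for g ranging over BS(1,q) is a finite collection of subsets of GL (Fin 2) ℚ. -/

import Mathlib

open Matrix

/-- The element `a` of `BS(1,q)`, with matrix `!![1, 1; 0, 1]`. -/
noncomputable def aElem : GL (Fin 2) ℚ :=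
  Matrix.GeneralLinearGroup.mkOfDetNeZero !![1, 1; 0, 1] (by norm_num [Matrix.det_fin_two_of])

/-- The element `t` of `BS(1,q)`, with matrix `!![(q : ℚ), 0; 0, 1]`. -/
noncomputable def tElem (q : ℕ) (hq : 2 ≤ q) : GL (Fin 2) ℚ :=
  Matrix.GeneralLinearGroup.mkOfDetNeZero !![(q : ℚ), 0; 0, 1]
    (by
      have hq0 : (q : ℚ) ≠ 0 := by
        simpa using (Nat.cast_ne_zero (R := ℚ)).2 (by omega)
      simp [Matrix.det_fin_two_of, hq0])

/-- `BS(1,q)` as the subgroup of `GL (Fin 2) ℚ` generated by `a` and `t`. -/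
noncomputable def BS (q : ℕ) (hq : 2 ≤ q) : Subgroup (GL (Fin 2) ℚ) :=
  Subgroup.closure {aElem, tElem q hq}

/-- The element `u k ℓ` with matrix `!![1, q^ℓ - q^(ℓ+k); 0, 1]`. -/
noncomputable def uElem (q : ℕ) (k ℓ : ℤ) : GL (Fin 2) ℚ :=
  Matrix.GeneralLinearGroup.mkOfDetNeZero !![1, (q : ℚ) ^ ℓ - (q : ℚ) ^ (ℓ + k); 0, 1]
    (by norm_num [Matrix.det_fin_two_of])

/-- The subgroup generated by `t^k` and the elements `u k ℓ`, `ℓ : ℤ`. -/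
noncomputable def Hsub (q : ℕ) (hq : 2 ≤ q) (k : ℤ) : Subgroup (GL (Fin 2) ℚ) :=
  Subgroup.closure ({(tElem q hq) ^ k} ∪ {g : GL (Fin 2) ℚ | ∃ ℓ : ℤ, g = uElem q k ℓ})


section Aux

noncomputable def Pm (q : ℕ) (hq : 2 ≤ q) (m : ℤ) (y : ℚ) : GL (Fin 2) ℚ :=
  have hq0 : (q : ℚ) ≠ 0 := by positivity
  ⟨!![(q:ℚ)^m, y; 0, 1], !![(q:ℚ)^(-m), -((q:ℚ)^(-m) * y); 0, 1],
    by
      ext i j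
      rw [Matrix.mul_fin_two]
      fin_cases i <;> fin_cases j <;>
        simp [Matrix.one_fin_two, _root_.zpow_neg] <;> field_simp <;> ring,
    by
      ext i j
      rw [Matrix.mul_fin_two]
      fin_cases i <;> fin_cases j <;>
        simp [Matrix.one_fin_two, _root_.zpow_neg] <;> field_simp <;> ring⟩

variable {q : ℕ} (hq : 2 ≤ q)

lemma Pm_val (m : ℤ) (y : ℚ) : (Pm q hq m y : Matrix (Fin 2) (Fin 2) ℚ) = !![(q:ℚ)^m, y; 0, 1] := rfl

lemma qQ_ne (hq : 2 ≤ q) : (q:ℚ) ≠ 0 := by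
  have : q ≠ 0 := by omega
  exact_mod_cast this

lemma Pm_mul (m n : ℤ) (y z : ℚ) :
    Pm q hq m y * Pm q hq n z = Pm q hq (m+n) ((q:ℚ)^m * z + y) := by
  apply Units.ext
  show (!![(q:ℚ)^m, y; 0, 1] * !![(q:ℚ)^n, z; 0, 1]) = _
  rw [Matrix.mul_fin_two, Pm_val, zpow_add₀ (qQ_ne hq)]
  congr 1 <;> ring

lemma Pm_one : Pm q hq 0 0 = 1 := by
  apply Units.ext
  show !![(q:ℚ)^(0:ℤ), 0; 0, 1] = (1 : Matrix (Fin 2) (Fin 2) ℚ)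
  simp [Matrix.one_fin_two]

lemma Pm_inv (m : ℤ) (y : ℚ) :
    (Pm q hq m y)⁻¹ = Pm q hq (-m) (-((q:ℚ)^(-m) * y)) := by
  apply inv_eq_of_mul_eq_one_left
  rw [Pm_mul, ← Pm_one (hq := hq)]
  congr 1
  · ring
  · ring

lemma aElem_eq : aElem = Pm q hq 0 1 := by
  apply Units.ext
  show !![(1:ℚ), 1; 0, 1] = !![(q:ℚ)^(0:ℤ), 1; 0, 1]
  norm_num

lemma tElem_eq : tElem q hq = Pm q hq 1 0 := by
  apply Units.ext
  show !![(q:ℚ), 0; 0, 1] = !![(q:ℚ)^(1:ℤ), 0; 0, 1]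
  norm_num

lemma uElem_eq (k ℓ : ℤ) : uElem q k ℓ = Pm q hq 0 ((q:ℚ)^ℓ - (q:ℚ)^(ℓ+k)) := by
  apply Units.ext
  show !![(1:ℚ), _; 0, 1] = !![(q:ℚ)^(0:ℤ), _; 0, 1]
  norm_num

lemma tElem_pow (n : ℕ) : tElem q hq ^ n = Pm q hq n 0 := by
  induction n with
  | zero => simpa using (Pm_one hq).symm
  | succ n ih =>
    rw [pow_succ, ih, tElem_eq hq, Pm_mul]
    norm_num

lemma tElem_zpow (n : ℤ) : tElem q hq ^ n = Pm q hq n 0 := by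
  rcases n with n | n
  · exact_mod_cast tElem_pow hq n
  · rw [zpow_negSucc, tElem_pow hq, Pm_inv]
    norm_num [Int.negSucc_eq]

lemma Pm0_pow (y : ℚ) (n : ℕ) : (Pm q hq 0 y) ^ n = Pm q hq 0 (n * y) := by
  induction n with
  | zero => simpa using (Pm_one hq).symm
  | succ n ih =>
    rw [pow_succ, ih, Pm_mul]
    push_cast
    norm_num
    congr 1
    ring

lemma Pm0_zpow (y : ℚ) (n : ℤ) : (Pm q hq 0 y) ^ n = Pm q hq 0 (n * y) := by
  rcases n with n | n
  · exact_mod_cast Pm0_pow hq y n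
  · rw [zpow_negSucc, Pm0_pow hq, Pm_inv]
    norm_num [Int.negSucc_eq]
    congr 1
    push_cast
    ring

lemma Pm_conj (m n : ℤ) (z y : ℚ) :
    Pm q hq m z * Pm q hq n y * (Pm q hq m z)⁻¹ =
      Pm q hq n ((q:ℚ)^m * y + (1 - (q:ℚ)^n) * z) := by
  rw [Pm_inv, Pm_mul, Pm_mul]
  have hq0 := qQ_ne hq
  congr 1
  · ring
  · rw [zpow_add₀ hq0, _root_.zpow_neg]
    field_simp
    ring

end Aux

section Main

variable {q : ℕ} (hq : 2 ≤ q) (k : ℤ) (hk : 1 ≤ k)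

lemma genH_cases {s : GL (Fin 2) ℚ}
    (hs : s ∈ ({(tElem q hq) ^ k} ∪ {g : GL (Fin 2) ℚ | ∃ ℓ : ℤ, g = uElem q k ℓ})) :
    s = tElem q hq ^ k ∨ ∃ ℓ : ℤ, s = uElem q k ℓ := by
  simpa [Set.mem_union, Set.mem_singleton_iff, Set.mem_setOf_eq] using hs

lemma tk_mem : tElem q hq ^ k ∈ Hsub q hq k :=
  Subgroup.subset_closure (Set.mem_union_left _ rfl)

lemma u_mem (ℓ : ℤ) : uElem q k ℓ ∈ Hsub q hq k :=
  Subgroup.subset_closure (Set.mem_union_right _ ⟨ℓ, rfl⟩)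

lemma Pk_zpow_mem (n : ℤ) : Pm q hq (k * n) 0 ∈ Hsub q hq k := by
  have h := zpow_mem (tk_mem hq k) n
  rwa [← _root_.zpow_mul, tElem_zpow] at h

lemma u_zpow_mem (m ℓ : ℤ) :
    Pm q hq 0 ((m : ℚ) * ((q:ℚ)^ℓ - (q:ℚ)^(ℓ+k))) ∈ Hsub q hq k := by
  have h := zpow_mem (u_mem hq k ℓ) m
  rwa [uElem_eq hq, Pm0_zpow] at h

lemma mixed_mem (n m ℓ : ℤ) :
    Pm q hq (k * n) ((m : ℚ) * ((q:ℚ)^ℓ - (q:ℚ)^(ℓ+k))) ∈ Hsub q hq k := by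
  have h := mul_mem (u_zpow_mem hq k m ℓ) (Pk_zpow_mem hq k n)
  rwa [Pm_mul, zero_add, zpow_zero, mul_zero, zero_add] at h

lemma Hsub_le_BS : Hsub q hq k ≤ BS q hq := by
  rw [Hsub, Subgroup.closure_le]
  intro s hs
  have ha : aElem ∈ BS q hq := Subgroup.subset_closure (Set.mem_insert _ _)
  have ht : tElem q hq ∈ BS q hq :=
    Subgroup.subset_closure (Set.mem_insert_of_mem _ rfl)
  rcases genH_cases hq k hs with rfl | ⟨ℓ, rfl⟩
  · exact zpow_mem ht k
  · have key : uElem q k ℓ =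
        (tElem q hq ^ ℓ * aElem * (tElem q hq ^ ℓ)⁻¹) *
          (tElem q hq ^ (ℓ+k) * aElem * (tElem q hq ^ (ℓ+k))⁻¹)⁻¹ := by
      rw [tElem_zpow, tElem_zpow, aElem_eq hq, Pm_conj, Pm_conj, Pm_inv, uElem_eq hq, Pm_mul]
      congr 1
      ring_nf
      simp [zpow_zero]
    rw [key]
    exact mul_mem (mul_mem (mul_mem (zpow_mem ht ℓ) ha) (inv_mem (zpow_mem ht ℓ)))
      (inv_mem (mul_mem (mul_mem (zpow_mem ht (ℓ+k)) ha) (inv_mem (zpow_mem ht (ℓ+k)))))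

lemma conj_gen (m z : ℤ) :
    ∀ s ∈ ({(tElem q hq) ^ k} ∪ {g : GL (Fin 2) ℚ | ∃ ℓ : ℤ, g = uElem q k ℓ}),
      Pm q hq m (z : ℚ) * s * (Pm q hq m (z : ℚ))⁻¹ ∈ Hsub q hq k := by
  intro s hs
  rcases genH_cases hq k hs with rfl | ⟨ℓ, rfl⟩
  · rw [tElem_zpow, Pm_conj]
    have : Pm q hq k ((q:ℚ)^m * 0 + (1 - (q:ℚ)^k) * (z:ℚ)) =
        Pm q hq (k * 1) ((z : ℚ) * ((q:ℚ)^(0:ℤ) - (q:ℚ)^(0+k))) := by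
      congr 1
      · ring
      · rw [zero_add, zpow_zero]; push_cast; ring
    rw [this]
    exact mixed_mem hq k 1 z 0
  · rw [uElem_eq hq, Pm_conj]
    have : Pm q hq 0 ((q:ℚ)^m * ((q:ℚ)^ℓ - (q:ℚ)^(ℓ+k)) + (1 - (q:ℚ)^(0:ℤ)) * (z:ℚ)) =
        Pm q hq (k * 0) (((1 : ℤ) : ℚ) * ((q:ℚ)^(ℓ+m) - (q:ℚ)^(ℓ+m+k))) := by
      congr 1
      · ring
      · simp only [zpow_zero, zpow_add₀ (qQ_ne hq)]
        push_cast; ring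
    rw [this]
    exact mixed_mem hq k 0 1 (ℓ+m)

lemma conj_closure_aux {G : Type*} [Group G] {S : Set G} {x : G}
    (hx : ∀ s ∈ S, x * s * x⁻¹ ∈ Subgroup.closure S) :
    ∀ h ∈ Subgroup.closure S, x * h * x⁻¹ ∈ Subgroup.closure S := by
  intro h hh
  have hsub : Subgroup.closure S ≤
      (Subgroup.closure S).comap (MulAut.conj x).toMonoidHom := by
    rw [Subgroup.closure_le]
    intro s hs
    simpa [Subgroup.mem_comap] using hx s hs
  simpa using hsub hh

lemma conj_all (m z : ℤ) :
    ∀ h ∈ Hsub q hq k, Pm q hq m (z : ℚ) * h * (Pm q hq m (z : ℚ))⁻¹ ∈ Hsub q hq k :=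
  conj_closure_aux (conj_gen hq k m z)

lemma normalizer_of {G : Type*} [Group G] {H : Subgroup G} {x : G}
    (h1 : ∀ h ∈ H, x * h * x⁻¹ ∈ H) (h2 : ∀ h ∈ H, x⁻¹ * h * x ∈ H) :
    x ∈ Subgroup.normalizer (H : Set G) := by
  rw [Subgroup.mem_normalizer_iff]
  intro h
  constructor
  · exact h1 h
  · intro hc
    have := h2 _ hc
    rwa [show x⁻¹ * (x * h * x⁻¹) * x = h by group] at this

lemma aElem_inv : aElem⁻¹ = Pm q hq 0 ((-1 : ℤ) : ℚ) := by
  rw [aElem_eq hq, Pm_inv]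
  norm_num

lemma tElem_inv : (tElem q hq)⁻¹ = Pm q hq (-1) ((0 : ℤ) : ℚ) := by
  rw [tElem_eq hq, Pm_inv]
  norm_num

lemma BS_le_normalizer : BS q hq ≤ Subgroup.normalizer (Hsub q hq k : Set (GL (Fin 2) ℚ)) := by
  rw [BS, Subgroup.closure_le]
  intro x hx
  rcases hx with rfl | hx
  · apply normalizer_of
    · intro h hh
      rw [aElem_eq hq]
      exact conj_all hq k 0 1 h hh  -- cast issue: (1:ℤ):ℚ vs 1
    · intro h hh
      have := conj_all hq k 0 (-1) h hh
      rwa [← aElem_inv hq, inv_inv] at this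
  · rcases hx with rfl
    apply normalizer_of
    · intro h hh
      rw [tElem_eq hq]
      exact conj_all hq k 1 0 h hh
    · intro h hh
      have := conj_all hq k (-1) 0 h hh
      rwa [← tElem_inv hq, inv_inv] at this

lemma conj_mem : ∀ g ∈ BS q hq, ∀ h ∈ Hsub q hq k, g * h * g⁻¹ ∈ Hsub q hq k := by
  intro g hg h hh
  exact (Subgroup.mem_normalizer_iff.mp (BS_le_normalizer hq k hg) h).mp hh

end Main


section Part3

lemma step_id {G : Type*} [Group G] (r' r x h g' : G) (hh : r⁻¹ * g' = h) :
    r'⁻¹ * (g' * x) = (r'⁻¹ * (r * x)) * (x⁻¹ * h * x) := by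
  subst hh
  group

lemma conj_mem' {q : ℕ} (hq : 2 ≤ q) (k : ℤ) :
    ∀ x ∈ BS q hq, ∀ h ∈ Hsub q hq k, x⁻¹ * h * x ∈ Hsub q hq k := by
  intro x hx h hh
  have := conj_mem hq k x⁻¹ (inv_mem hx) h hh
  rwa [inv_inv] at this

lemma M_pos {q : ℕ} (hq : 2 ≤ q) (k : ℤ) (hk : 1 ≤ k) : 0 < (q:ℤ)^(k.toNat) - 1 := by
  have h1 : 1 ≤ k.toNat := by omega
  have h2 : (q:ℤ) ≤ (q:ℤ)^(k.toNat) := by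
    calc (q:ℤ) = (q:ℤ)^1 := (pow_one _).symm
    _ ≤ (q:ℤ)^(k.toNat) := pow_le_pow_right₀ (by exact_mod_cast Nat.one_le_of_lt hq) h1
  have : (2:ℤ) ≤ q := by exact_mod_cast hq
  omega

lemma M_cast {q : ℕ} (k : ℤ) (hk : 1 ≤ k) :
    (((q:ℤ)^(k.toNat) - 1 : ℤ) : ℚ) = (q:ℚ)^(k:ℤ) - 1 := by
  obtain ⟨n, rfl⟩ : ∃ n : ℕ, k = n := ⟨k.toNat, (Int.toNat_of_nonneg (by omega)).symm⟩
  rw [Int.toNat_natCast]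
  push_cast [zpow_natCast]
  ring

lemma qpow_cast {q : ℕ} (j : ℤ) (hj : 0 ≤ j) : (((q:ℤ)^(j.toNat) : ℤ) : ℚ) = (q:ℚ)^j := by
  obtain ⟨n, rfl⟩ : ∃ n : ℕ, j = n := ⟨j.toNat, (Int.toNat_of_nonneg hj).symm⟩
  rw [Int.toNat_natCast]
  push_cast [zpow_natCast]
  ring

lemma shift_mem {q : ℕ} (hq : 2 ≤ q) (k : ℤ) (hk : 1 ≤ k) (j c i₂ s : ℤ)
    (hdiff : c - i₂ = ((q:ℤ)^(k.toNat) - 1) * s) :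
    (Pm q hq j (i₂:ℚ))⁻¹ * Pm q hq j (c:ℚ) ∈ Hsub q hq k := by
  rw [Pm_inv, Pm_mul]
  have h1 : ((c:ℚ) - (i₂:ℚ)) = ((q:ℚ)^(k:ℤ) - 1) * (s:ℚ) := by
    rw [← M_cast k hk]
    exact_mod_cast hdiff
  have hval : (q:ℚ)^(-j) * (c:ℚ) + -((q:ℚ)^(-j) * (i₂:ℚ)) =
      ((-s : ℤ) : ℚ) * ((q:ℚ)^(-j) - (q:ℚ)^(-j + k)) := by
    rw [zpow_add₀ (qQ_ne hq)]
    push_cast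
    linear_combination ((q:ℚ)^(-j)) * h1
  have hidx : -j + j = (0:ℤ) := by ring
  rw [hidx, hval]
  exact u_zpow_mem hq k (-s) (-j)

lemma step_mem {q : ℕ} (hq : 2 ≤ q) (k : ℤ) (i j i' j' : ℤ) (g' x : GL (Fin 2) ℚ)
    (hxBS : x ∈ BS q hq)
    (hmem : (Pm q hq j (i:ℚ))⁻¹ * g' ∈ Hsub q hq k)
    (hkey : (Pm q hq j' (i':ℚ))⁻¹ * (Pm q hq j (i:ℚ) * x) ∈ Hsub q hq k) :
    (Pm q hq j' (i':ℚ))⁻¹ * (g' * x) ∈ Hsub q hq k := by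
  rw [step_id _ (Pm q hq j (i:ℚ)) x _ g' rfl]
  exact mul_mem hkey (conj_mem' hq k x hxBS _ hmem)

lemma qpow_cast' {q : ℕ} (j : ℤ) (hj : 0 ≤ j) : (q:ℚ)^(j.toNat) = (q:ℚ)^(j:ℤ) := by
  obtain ⟨n, rfl⟩ : ∃ n : ℕ, j = n := ⟨j.toNat, (Int.toNat_of_nonneg hj).symm⟩
  rw [Int.toNat_natCast, zpow_natCast]


lemma rep_exists {q : ℕ} (hq : 2 ≤ q) (k : ℤ) (hk : 1 ≤ k) : ∀ g ∈ BS q hq, ∃ i j : ℤ,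
    0 ≤ i ∧ i < (q:ℤ)^(k.toNat) - 1 ∧ 0 ≤ j ∧ j < k ∧
      (Pm q hq j (i:ℚ))⁻¹ * g ∈ Hsub q hq k := by
  set M : ℤ := (q:ℤ)^(k.toNat) - 1 with hM
  have hMpos := M_pos hq k hk
  intro g hg
  induction hg using Subgroup.closure_induction_right with
  | one =>
    refine ⟨0, 0, le_refl _, hMpos, le_refl _, hk, ?_⟩
    rw [show ((0:ℤ):ℚ) = 0 from rfl, Pm_one hq]
    simpa using one_mem _
  | mul_right g' hg' x hx ih =>
    obtain ⟨i, j, hi0, hiM, hj0, hjk, hmem⟩ := ih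
    have hxBS : x ∈ BS q hq := Subgroup.subset_closure hx
    rcases hx with rfl | hx
    · -- x = aElem
      set c : ℤ := i + (q:ℤ)^(j.toNat) with hc
      have hcalc : Pm q hq j (i:ℚ) * aElem = Pm q hq j (c:ℚ) := by
        rw [aElem_eq hq, Pm_mul]
        congr 1
        · ring
        · push_cast [hc]
          rw [qpow_cast' j hj0]
          ring
      refine ⟨c % M, j, Int.emod_nonneg c (ne_of_gt hMpos), Int.emod_lt_of_pos c hMpos,
        hj0, hjk, ?_⟩
      refine step_mem hq k i j (c % M) j g' aElem hxBS hmem ?_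
      rw [hcalc]
      refine shift_mem hq k hk j c (c % M) (c / M) ?_
      rw [← hM]
      have := Int.mul_ediv_add_emod c M
      omega
    · rcases hx with rfl
      -- x = tElem
      have hcalc : Pm q hq j (i:ℚ) * tElem q hq = Pm q hq (j+1) (i:ℚ) := by
        rw [tElem_eq hq, Pm_mul]
        norm_num
      by_cases hjj : j + 1 < k
      · refine ⟨i, j+1, hi0, hiM, by omega, hjj, ?_⟩
        refine step_mem hq k i j i (j+1) g' (tElem q hq) hxBS hmem ?_
        rw [hcalc, inv_mul_cancel]
        exact one_mem _
      · have hjk1 : j + 1 = k := by omega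
        refine ⟨i, 0, hi0, hiM, le_refl _, hk, ?_⟩
        refine step_mem hq k i j i 0 g' (tElem q hq) hxBS hmem ?_
        rw [hcalc, hjk1, Pm_inv, Pm_mul]
        have he : Pm q hq (-0 + k) ((q:ℚ)^(-(0:ℤ)) * (i:ℚ) + -((q:ℚ)^(-(0:ℤ)) * (i:ℚ))) =
            tElem q hq ^ k := by
          rw [tElem_zpow hq k]
          congr 1
          · ring
          · ring
        rw [he]
        exact tk_mem hq k
  | mul_inv_cancel g' hg' x hx ih =>
    obtain ⟨i, j, hi0, hiM, hj0, hjk, hmem⟩ := ih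
    have hxBS : x⁻¹ ∈ BS q hq := inv_mem (Subgroup.subset_closure hx)
    rcases hx with rfl | hx
    · -- x = aElem
      set c : ℤ := i - (q:ℤ)^(j.toNat) with hc
      have hcalc : Pm q hq j (i:ℚ) * aElem⁻¹ = Pm q hq j (c:ℚ) := by
        rw [aElem_inv hq, Pm_mul]
        congr 1
        · ring
        · push_cast [hc]
          rw [qpow_cast' j hj0]
          ring
      refine ⟨c % M, j, Int.emod_nonneg c (ne_of_gt hMpos), Int.emod_lt_of_pos c hMpos,
        hj0, hjk, ?_⟩
      refine step_mem hq k i j (c % M) j g' aElem⁻¹ hxBS hmem ?_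
      rw [hcalc]
      refine shift_mem hq k hk j c (c % M) (c / M) ?_
      rw [← hM]
      have := Int.mul_ediv_add_emod c M
      omega
    · rcases hx with rfl
      -- x = tElem
      have hcalc : Pm q hq j (i:ℚ) * (tElem q hq)⁻¹ = Pm q hq (j + -1) (i:ℚ) := by
        rw [tElem_inv hq, Pm_mul]
        norm_num
      by_cases hjj : 0 < j
      · refine ⟨i, j-1, hi0, hiM, by omega, by omega, ?_⟩
        refine step_mem hq k i j i (j-1) g' (tElem q hq)⁻¹ hxBS hmem ?_
        rw [hcalc, show j + -1 = j - 1 by ring, inv_mul_cancel]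
        exact one_mem _
      · have hj00 : j = 0 := by omega
        refine ⟨i, k-1, hi0, hiM, by omega, by omega, ?_⟩
        refine step_mem hq k i j i (k-1) g' (tElem q hq)⁻¹ hxBS hmem ?_
        rw [hcalc, hj00, Pm_inv, Pm_mul]
        have he : Pm q hq (-(k-1) + (0 + -1)) ((q:ℚ)^(-(k-1)) * (i:ℚ) + -((q:ℚ)^(-(k-1)) * (i:ℚ))) =
            (tElem q hq ^ k)⁻¹ := by
          rw [← _root_.zpow_neg, tElem_zpow hq (-k)]
          congr 1
          · ring
          · ring
        rw [he]
        exact inv_mem (tk_mem hq k)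

end Part3

lemma coset_eq {G : Type*} [Group G] (H : Subgroup G) (g r : G) (hm : r⁻¹ * g ∈ H) :
    {x : G | ∃ h ∈ H, x = g * h} = {x : G | ∃ h ∈ H, x = r * h} := by
  ext x
  simp only [Set.mem_setOf_eq]
  constructor
  · rintro ⟨h, hh, rfl⟩
    exact ⟨(r⁻¹ * g) * h, mul_mem hm hh, by group⟩
  · rintro ⟨h, hh, rfl⟩
    exact ⟨(r⁻¹ * g)⁻¹ * h, mul_mem (inv_mem hm) hh, by group⟩

/-- `H` is a normal subgroup of `BS(1,q)` of finite index. -/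
theorem Hsub_le_normal_finite_index (q : ℕ) (hq : 2 ≤ q) (k : ℤ) (hk : 1 ≤ k) :
    Hsub q hq k ≤ BS q hq ∧
    (∀ g ∈ BS q hq, ∀ h ∈ Hsub q hq k, g * h * g⁻¹ ∈ Hsub q hq k) ∧
    Set.Finite {C : Set (GL (Fin 2) ℚ) |
      ∃ g ∈ BS q hq, C = {x : GL (Fin 2) ℚ | ∃ h ∈ Hsub q hq k, x = g * h}} := by
  refine ⟨Hsub_le_BS hq k, conj_mem hq k, ?_⟩
  set M : ℤ := (q:ℤ)^(k.toNat) - 1 with hM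
  have hfin : Set.Finite ((fun p : ℤ × ℤ =>
      {x : GL (Fin 2) ℚ | ∃ h ∈ Hsub q hq k, x = Pm q hq p.2 (p.1:ℚ) * h}) ''
        (Set.Icc (0:ℤ) (M-1) ×ˢ Set.Icc (0:ℤ) (k-1))) :=
    ((Set.finite_Icc _ _).prod (Set.finite_Icc _ _)).image _
  refine Set.Finite.subset hfin ?_
  rintro C ⟨g, hg, rfl⟩
  obtain ⟨i, j, hi0, hiM, hj0, hjk, hmem⟩ := rep_exists hq k hk g hg
  refine ⟨(i, j), ⟨⟨hi0, by omega⟩, ⟨hj0, by omega⟩⟩, ?_⟩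
  exact (coset_eq (Hsub q hq k) g (Pm q hq j (i:ℚ)) hmem).symm
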